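/- Let k ≥ 1 be an integer, M = [[α,β],[γ,δ]] ∈ SL₂(ℤ), and 𝔷 a point of the upper half-plane. Let f be a complex-valued function on the upper half-plane minus a discrete set, satisfying f(M·z) = (γz+δ)^{2k} f(z) wherever defined. Suppose there exist an integer N, coefficients a, b : ℤ → ℂ vanishing for indices below −N, and radii ε, ε' ∈ (0,1) such that f(z)·(z − conj(𝔷))^{2k} = ∑_{n ≥ −N} a(n)·X_𝔷(z)^n for all z with 0 < |X_𝔷(z)| < ε (the series converging absolutely), and f(z)·(z − conj(M·𝔷))^{2k} = ∑_{n ≥ −N} b(n)·X_{M·𝔷}(z)^n for all z with 0 < |X_{M·𝔷}(z)| < ε'. Then for every integer n, b(n) = (γ·conj(𝔷) + δ)^{−2k−n} · (γ𝔷 + δ)^{n} · a(n). -/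

import Mathlib

/-- `X_ϱ(z) = (z − ϱ)/(z − conj ϱ)`. -/
noncomputable def ellX (ϱ z : ℂ) : ℂ := (z - ϱ) / (z - (starRingEnd ℂ) ϱ)

open FormalMultilinearSeries in
lemma laurent_unique (B : ℤ → ℂ) (N : ℕ) (r : ℝ) (hr : 0 < r)
    (hB0 : ∀ n : ℤ, n < -(N : ℤ) → B n = 0)
    (hsum : ∀ q : ℂ, 0 < ‖q‖ → ‖q‖ < r →
      Summable (fun n : ℤ => ‖B n * q ^ n‖))
    (heq : ∀ q : ℂ, 0 < ‖q‖ → ‖q‖ < r →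
      ∑' n : ℤ, B n * q ^ n = 0) :
    ∀ n : ℤ, B n = 0 := by
  set c' : ℕ → ℂ := fun m => B ((m : ℤ) - N) with hc'
  set p : FormalMultilinearSeries ℂ ℂ ℂ := ofScalars ℂ c' with hp
  have hi : Function.Injective (fun m : ℕ => (m : ℤ) - N) := by
    intro x y h; simp only at h; omega
  -- reindexing
  have reindex : ∀ q : ℂ, q ≠ 0 →
      ∑' m : ℕ, c' m * q ^ m = (∑' n : ℤ, B n * q ^ n) * q ^ (N : ℕ) := by
    intro q hq
    rw [← tsum_mul_right]
    have h1 : ∀ n : ℤ, (B n * q ^ n) * q ^ (N : ℕ) = B n * q ^ (n + N) := by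
      intro n
      rw [zpow_add₀ hq, zpow_natCast]; ring
    rw [tsum_congr h1]
    rw [← Function.Injective.tsum_eq hi (f := fun n : ℤ => B n * q ^ (n + N))]
    · apply tsum_congr
      intro m
      simp only [hc']
      congr 1
      rw [show ((m:ℤ) - N) + N = (m : ℤ) by ring, zpow_natCast]
    · intro n hn
      rcases le_or_gt (-(N:ℤ)) n with h | h
      · exact ⟨(n + N).toNat, by simp only; omega⟩
      · exfalso; apply hn; show B n * q ^ (n + (N:ℤ)) = 0; rw [hB0 n h, zero_mul]
  -- radius positivity
  have ht : (0:ℝ) < r / 2 := by linarith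
  have hq₀pos : 0 < ‖((r/2 : ℝ) : ℂ)‖ := by
    rwa [Complex.norm_real, Real.norm_eq_abs, abs_of_pos ht]
  have hq₀lt : ‖((r/2 : ℝ) : ℂ)‖ < r := by
    rw [Complex.norm_real, Real.norm_eq_abs, abs_of_pos ht]; linarith
  have hS := hsum ((r/2 : ℝ) : ℂ) hq₀pos hq₀lt
  have hSnat : Summable (fun m : ℕ => ‖p m‖ * (r/2) ^ m) := by
    have h2 : Summable (fun n : ℤ => ‖B n * ((r/2:ℝ):ℂ) ^ n‖ * (r/2)^(N:ℕ)) :=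
      hS.mul_right _
    have h3 := h2.comp_injective hi
    have habs : ∀ z : ℤ, ‖((r/2:ℝ):ℂ) ^ z‖ = (r/2) ^ z := by
      intro z
      rw [norm_zpow, Complex.norm_real, Real.norm_eq_abs, abs_of_pos ht]
    have h4 : Summable (fun m : ℕ => ‖c' m‖ * (r/2) ^ m) := by
      apply h3.congr
      intro m
      simp only [Function.comp]
      rw [norm_mul, habs, mul_assoc, ← zpow_natCast (r/2) m, ← zpow_natCast (r/2) N,
        ← zpow_add₀ (ne_of_gt ht)]
      congr 2
      ring
    apply Summable.of_nonneg_of_le _ _ h4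
    · intro m
      positivity
    · intro m
      apply mul_le_mul_of_nonneg_right _ (pow_nonneg (le_of_lt ht) m)
      show ‖c' m • ContinuousMultilinearMap.mkPiAlgebraFin ℂ m ℂ‖ ≤ ‖c' m‖
      refine le_trans (ContinuousMultilinearMap.opNorm_smul_le _ _) ?_
      simp [ContinuousMultilinearMap.norm_mkPiAlgebraFin]
  have hrad : 0 < p.radius := by
    have hle := p.le_radius_of_summable (r := ⟨r/2, le_of_lt ht⟩) (by exact hSnat)
    refine lt_of_lt_of_le ?_ hle
    exact ENNReal.coe_pos.mpr (by exact_mod_cast ht)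
  have hball := p.hasFPowerSeriesOnBall hrad
  have hsum_eq : ∀ q : ℂ, p.sum q = ∑' m : ℕ, c' m * q ^ m := by
    intro q
    apply tsum_congr
    intro m
    rw [hp, ofScalars_apply_eq, smul_eq_mul]
  have hzero_punct : ∀ q : ℂ, ‖q‖ < r → q ≠ 0 → p.sum q = 0 := by
    intro q hq hq0
    rw [hsum_eq, reindex q hq0,
      heq q (norm_pos_iff.mpr hq0) hq, zero_mul]
  have hmemball : ∀ q : ℂ, ‖q‖ < r → q ∈ Metric.ball (0:ℂ) r := by
    intro q hq; simpa [Metric.mem_ball, Complex.dist_eq] using hq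
  have hsum0 : p.sum 0 = 0 := by
    have hcont : ContinuousAt p.sum 0 := by
      apply (hball.continuousOn).continuousAt
      exact EMetric.isOpen_ball.mem_nhds (EMetric.mem_ball_self hrad)
    have T1 : Filter.Tendsto p.sum (nhdsWithin 0 {(0:ℂ)}ᶜ) (nhds (p.sum 0)) :=
      hcont.tendsto.mono_left nhdsWithin_le_nhds
    have T2 : Filter.Tendsto p.sum (nhdsWithin 0 {(0:ℂ)}ᶜ) (nhds 0) := by
      apply Filter.Tendsto.congr' _ tendsto_const_nhds
      have hmem : {q : ℂ | ‖q‖ < r} ∈ nhdsWithin (0:ℂ) {(0:ℂ)}ᶜ := by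
        apply nhdsWithin_le_nhds
        have : Metric.ball (0:ℂ) r ∈ nhds (0:ℂ) := Metric.ball_mem_nhds _ hr
        apply Filter.mem_of_superset this
        intro q hq; simpa [Metric.mem_ball, Complex.dist_eq] using hq
      filter_upwards [hmem, self_mem_nhdsWithin] with q hq hq0
      exact (hzero_punct q hq (by simpa using hq0)).symm
    exact tendsto_nhds_unique T1 T2
  have heq0 : p.sum =ᶠ[nhds (0:ℂ)] 0 := by
    have hmem : {q : ℂ | ‖q‖ < r} ∈ nhds (0:ℂ) := by
      have : Metric.ball (0:ℂ) r ∈ nhds (0:ℂ) := Metric.ball_mem_nhds _ hr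
      apply Filter.mem_of_superset this
      intro q hq; simpa [Metric.mem_ball, Complex.dist_eq] using hq
    filter_upwards [hmem] with q hq
    by_cases hq0 : q = 0
    · subst hq0; simpa using hsum0
    · simpa using hzero_punct q hq hq0
  have hp0 : p = 0 := hball.hasFPowerSeriesAt.eq_zero_of_eventually heq0
  have hc0 : ∀ m : ℕ, c' m = 0 := by
    intro m
    have := congrFun hp0 m
    rw [hp] at this
    exact (ofScalars_eq_zero (𝕜 := ℂ) (c := c') ℂ m).mp (by simpa using this)
  intro n
  rcases lt_or_ge n (-(N:ℤ)) with h | h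
  · exact hB0 n h
  · have h2 := hc0 (n + N).toNat
    simp only [hc'] at h2
    rwa [show (((n + N).toNat : ℤ)) - (N:ℤ) = n by omega] at h2

lemma jfac_ne_zero (γ δ : ℤ) (hns : ¬(γ = 0 ∧ δ = 0)) (z : ℂ) (hz : z.im ≠ 0) :
    (γ:ℂ) * z + δ ≠ 0 := by
  intro h0
  have h1 : (γ:ℝ) * z.im = 0 := by
    have := congrArg Complex.im h0
    simpa [Complex.add_im, Complex.mul_im] using this
  have hγ : (γ:ℝ) = 0 := by
    rcases mul_eq_zero.mp h1 with h | h
    · exact h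
    · exact absurd h hz
  have hγ' : γ = 0 := by exact_mod_cast hγ
  have h2 : (γ:ℝ) * z.re + δ = 0 := by
    have := congrArg Complex.re h0
    simpa [Complex.add_re, Complex.mul_re] using this
  rw [hγ, zero_mul, zero_add] at h2
  exact hns ⟨hγ', by exact_mod_cast h2⟩

lemma moebius_im (α β γ δ : ℤ) (hdet : α * δ - β * γ = 1) (z : ℂ) :
    (((α:ℂ) * z + β) / ((γ:ℂ) * z + δ)).im = z.im / Complex.normSq ((γ:ℂ) * z + δ) := by
  have hdetR : (α:ℝ) * δ - β * γ = 1 := by exact_mod_cast hdet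
  have h : ((α:ℂ)*z+β).im * ((γ:ℂ)*z+δ).re - ((α:ℂ)*z+β).re * ((γ:ℂ)*z+δ).im = z.im := by
    simp only [Complex.add_re, Complex.add_im, Complex.mul_re, Complex.mul_im,
      Complex.intCast_re, Complex.intCast_im]
    ring_nf
    linear_combination z.im * hdetR
  rw [Complex.div_im, ← sub_div, h]

lemma moebius_sub (α β γ δ : ℤ) (hdet : α * δ - β * γ = 1) (u v : ℂ)
    (hu : (γ:ℂ) * u + δ ≠ 0) (hv : (γ:ℂ) * v + δ ≠ 0) :
    ((α:ℂ) * u + β) / ((γ:ℂ) * u + δ) - ((α:ℂ) * v + β) / ((γ:ℂ) * v + δ)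
      = (u - v) / (((γ:ℂ) * u + δ) * ((γ:ℂ) * v + δ)) := by
  have hdetC : (α:ℂ) * δ - β * γ = 1 := by exact_mod_cast hdet
  rw [div_sub_div _ _ hu hv]
  congr 1
  linear_combination (u - v) * hdetC

/-- Let `k ≥ 1`, `M = [[α,β],[γ,δ]] ∈ SL₂(ℤ)`, `𝔷 ∈ ℍ`, and let `f` satisfy
`f(M·z) = (γz+δ)^{2k} f(z)` on the upper half-plane. If `f(z)(z − conj 𝔷)^{2k}
= ∑_{n ≥ −N} a(n) X_𝔷(z)^n` on a punctured disc `0 < |X_𝔷(z)| < ε` (absolutely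
convergent), and similarly with `M·𝔷`, `b(n)`, `ε'`, then for every `n`:
`b(n) = (γ conj(𝔷) + δ)^{−2k−n} (γ𝔷 + δ)^n a(n)`. -/
theorem stmt_18 (k : ℕ) (hk : 1 ≤ k) (α β γ δ : ℤ) (hdet : α * δ - β * γ = 1)
    (ζ : UpperHalfPlane) (f : ℂ → ℂ)
    (hmod : ∀ z : ℂ, 0 < z.im →
        f (((α : ℂ) * z + (β : ℂ)) / ((γ : ℂ) * z + (δ : ℂ)))
          = ((γ : ℂ) * z + (δ : ℂ)) ^ (2 * k) * f z)
    (N : ℕ) (a b : ℤ → ℂ)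
    (ha0 : ∀ n : ℤ, n < -(N : ℤ) → a n = 0) (hb0 : ∀ n : ℤ, n < -(N : ℤ) → b n = 0)
    (ε ε' : ℝ) (hε0 : 0 < ε) (hε1 : ε < 1) (hε'0 : 0 < ε') (hε'1 : ε' < 1)
    (hexpa : ∀ z : ℂ, 0 < ‖ellX (ζ : ℂ) z‖ → ‖ellX (ζ : ℂ) z‖ < ε →
        Summable (fun n : ℤ => ‖a n * ellX (ζ : ℂ) z ^ n‖)
        ∧ f z * (z - (starRingEnd ℂ) (ζ : ℂ)) ^ (2 * k)
            = ∑' n : ℤ, a n * ellX (ζ : ℂ) z ^ n)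
    (hexpb : ∀ z : ℂ,
        0 < ‖ellX (((α : ℂ) * (ζ : ℂ) + (β : ℂ))
            / ((γ : ℂ) * (ζ : ℂ) + (δ : ℂ))) z‖ →
        ‖ellX (((α : ℂ) * (ζ : ℂ) + (β : ℂ))
            / ((γ : ℂ) * (ζ : ℂ) + (δ : ℂ))) z‖ < ε' →
        Summable (fun n : ℤ => ‖b n
            * ellX (((α : ℂ) * (ζ : ℂ) + (β : ℂ)) / ((γ : ℂ) * (ζ : ℂ) + (δ : ℂ))) z ^ n‖)
        ∧ f z * (z - (starRingEnd ℂ) (((α : ℂ) * (ζ : ℂ) + (β : ℂ))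
              / ((γ : ℂ) * (ζ : ℂ) + (δ : ℂ)))) ^ (2 * k)
            = ∑' n : ℤ, b n
                * ellX (((α : ℂ) * (ζ : ℂ) + (β : ℂ)) / ((γ : ℂ) * (ζ : ℂ) + (δ : ℂ))) z ^ n) :
    ∀ n : ℤ,
      b n = ((γ : ℂ) * (starRingEnd ℂ) (ζ : ℂ) + (δ : ℂ)) ^ (-(2 * (k : ℤ)) - n)
          * ((γ : ℂ) * (ζ : ℂ) + (δ : ℂ)) ^ n * a n := by
  set zeta : ℂ := (ζ : ℂ) with hzeta
  have hy : 0 < zeta.im := ζ.2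
  set zbar : ℂ := (starRingEnd ℂ) zeta with hzbar
  set w : ℂ := (γ:ℂ) * zeta + δ with hwdef
  set w' : ℂ := (γ:ℂ) * zbar + δ with hw'def
  have hns : ¬(γ = 0 ∧ δ = 0) := by
    rintro ⟨rfl, rfl⟩; simp at hdet
  have hzbar_im : zbar.im = -zeta.im := Complex.conj_im zeta
  have hw : w ≠ 0 := jfac_ne_zero γ δ hns zeta (ne_of_gt hy)
  have hw' : w' ≠ 0 := jfac_ne_zero γ δ hns zbar (by rw [hzbar_im]; exact ne_of_lt (by linarith))
  have hw'conj : w' = (starRingEnd ℂ) w := by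
    rw [hw'def, hwdef, map_add, map_mul, map_intCast, map_intCast, ← hzbar]
  set c : ℂ := w' / w with hcdef
  have hcabs : ‖c‖ = 1 := by
    rw [hcdef, hw'conj, norm_div, Complex.norm_conj, div_self]
    exact norm_ne_zero_iff.mpr hw
  set r : ℝ := min ε ε' with hrdef
  have hr : 0 < r := lt_min hε0 hε'0
  have hr1 : r < 1 := lt_of_le_of_lt (min_le_left _ _) hε1
  set B : ℤ → ℂ := fun n => w' ^ (2*k) * (c ^ n * b n) - a n with hBdef
  have main : ∀ q : ℂ, 0 < ‖q‖ → ‖q‖ < r →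
      Summable (fun n : ℤ => ‖B n * q ^ n‖) ∧ (∑' n : ℤ, B n * q ^ n) = 0 := by
    intro q hq0 hqr
    have hq0' : q ≠ 0 := by
      intro h; rw [h] at hq0; simp at hq0
    have hq1 : ‖q‖ < 1 := hqr.trans hr1
    have hq_lt_ε : ‖q‖ < ε := lt_of_lt_of_le hqr (min_le_left _ _)
    have hq_lt_ε' : ‖q‖ < ε' := lt_of_lt_of_le hqr (min_le_right _ _)
    have h1q : (1:ℂ) - q ≠ 0 := by
      intro h
      have hq' : q = 1 := by linear_combination -h
      rw [hq'] at hq1; simp at hq1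
    set z : ℂ := (zeta - q * zbar) / (1 - q) with hzdef
    have hnum : (zeta - q*zbar).im * ((1:ℂ)-q).re - (zeta - q*zbar).re * ((1:ℂ)-q).im
        = zeta.im * (1 - Complex.normSq q) := by
      simp only [hzbar, Complex.sub_re, Complex.sub_im, Complex.mul_re, Complex.mul_im,
        Complex.one_re, Complex.one_im, Complex.conj_re, Complex.conj_im,
        Complex.normSq_apply]
      ring
    have hzim : z.im = zeta.im * (1 - Complex.normSq q) / Complex.normSq (1 - q) := by
      rw [hzdef, Complex.div_im, ← sub_div, hnum]
    have hzim_pos : 0 < z.im := by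
      rw [hzim]
      apply div_pos
      · apply mul_pos hy
        have := Complex.sq_norm q
        nlinarith [norm_nonneg q]
      · exact Complex.normSq_pos.mpr h1q
    have hzbzb : zeta - zbar ≠ 0 := by
      intro h
      have := congrArg Complex.im h
      simp only [Complex.sub_im, hzbar_im, Complex.zero_im] at this
      linarith
    have hzsub : z - zbar = (zeta - zbar) / (1 - q) := by
      rw [hzdef]; field_simp; ring
    have hzzb_ne : z - zbar ≠ 0 := by
      rw [hzsub]; exact div_ne_zero hzbzb h1q
    have hkey : z - zeta = q * (z - zbar) := by
      rw [hzdef]; field_simp; ring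
    have hellX : ellX zeta z = q := by
      rw [ellX, ← hzbar, hkey, mul_div_assoc, div_self hzzb_ne, mul_one]
    obtain ⟨sa, ea⟩ := hexpa z (by rw [hellX]; exact hq0) (by rw [hellX]; exact hq_lt_ε)
    rw [hellX] at sa ea
    -- the transformed point
    have hjz_ne : (γ:ℂ) * z + δ ≠ 0 := jfac_ne_zero γ δ hns z (ne_of_gt hzim_pos)
    set jz : ℂ := (γ:ℂ) * z + δ with hjz
    set Mz : ℂ := ((α:ℂ) * z + β) / jz with hMzdef
    have hMzim : 0 < Mz.im := by
      rw [hMzdef, hjz, moebius_im α β γ δ hdet z]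
      exact div_pos hzim_pos (Complex.normSq_pos.mpr hjz_ne)
    have hconjM : (starRingEnd ℂ) (((α:ℂ) * zeta + β) / w)
        = ((α:ℂ) * zbar + β) / w' := by
      rw [hwdef, hw'def]
      simp only [map_div₀, map_add, map_mul, map_intCast]
      rfl
    have key1 : Mz - ((α:ℂ) * zeta + β) / w = (z - zeta) / (jz * w) := by
      rw [hMzdef, hjz, hwdef]
      exact moebius_sub α β γ δ hdet z zeta hjz_ne (by rw [← hwdef]; exact hw)
    have key2 : Mz - ((α:ℂ) * zbar + β) / w' = (z - zbar) / (jz * w') := by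
      rw [hMzdef, hjz, hw'def]
      exact moebius_sub α β γ δ hdet z zbar hjz_ne (by rw [← hw'def]; exact hw')
    have hellXM : ellX (((α:ℂ) * zeta + β) / w) Mz = q * c := by
      rw [ellX, hconjM, key1, key2, hkey, hcdef]
      field_simp
      try ring
    have habsM : ‖ellX (((α:ℂ) * zeta + β) / w) Mz‖ = ‖q‖ := by
      rw [hellXM, norm_mul, hcabs, mul_one]
    obtain ⟨sb, eb⟩ := hexpb Mz (by rw [habsM]; exact hq0) (by rw [habsM]; exact hq_lt_ε')
    rw [hellXM] at sb eb
    have hfMz : f Mz = jz ^ (2*k) * f z := by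
      have := hmod z hzim_pos
      rw [← hjz, ← hMzdef] at this
      exact this
    have LHSb : f Mz * (Mz - (starRingEnd ℂ) (((α:ℂ) * zeta + β) / w)) ^ (2*k)
        = f z * (z - zbar) ^ (2*k) / w' ^ (2*k) := by
      rw [hconjM, key2, hfMz, div_pow, mul_pow]
      field_simp
    rw [LHSb, ea] at eb
    -- eb : (∑' n, a n * q^n) / w'^(2k) = ∑' n, b n * (q*c)^n
    have hpt : ∀ n : ℤ, B n * q ^ n = w' ^ (2*k) * (b n * (q*c) ^ n) - a n * q ^ n := by
      intro n
      simp only [hBdef]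
      rw [mul_zpow]
      ring
    have s2' : Summable (fun n : ℤ => b n * (q*c) ^ n) := by
      apply Summable.of_norm
      exact sb
    have s1' : Summable (fun n : ℤ => a n * q ^ n) := by
      apply Summable.of_norm
      exact sa
    have sB : Summable (fun n : ℤ => B n * q ^ n) := by
      apply Summable.congr _ (fun n => (hpt n).symm)
      exact (s2'.mul_left _).sub s1'
    constructor
    · have := summable_norm_iff.mpr sB
      exact this
    · have t1 : ∑' n : ℤ, B n * q ^ n
          = w' ^ (2*k) * (∑' n : ℤ, b n * (q*c) ^ n) - ∑' n : ℤ, a n * q ^ n := by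
        rw [tsum_congr hpt, Summable.tsum_sub ((s2'.mul_left _)) s1', tsum_mul_left]
      rw [t1, ← eb]
      field_simp
      ring
  have hB0 : ∀ n : ℤ, n < -(N : ℤ) → B n = 0 := by
    intro n hn
    simp only [hBdef]
    rw [ha0 n hn, hb0 n hn]
    simp
  have hBall := laurent_unique B N r hr hB0 (fun q h1 h2 => (main q h1 h2).1)
    (fun q h1 h2 => (main q h1 h2).2)
  intro n
  have h := hBall n
  simp only [hBdef] at h
  have ha' : a n = w' ^ (2*k) * (c ^ n * b n) := (sub_eq_zero.mp h).symm
  rw [ha']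
  have e1 : w' ^ (-(2 * (k:ℤ)) - n) = (w' ^ (2*k))⁻¹ * (w' ^ n)⁻¹ := by
    rw [show -(2 * (k:ℤ)) - n = -((2*k : ℕ):ℤ) + (-n) by push_cast; ring,
      zpow_add₀ hw', zpow_neg, zpow_neg, zpow_natCast]
  rw [e1, hcdef, div_zpow]
  field_simp [zpow_ne_zero n hw, zpow_ne_zero n hw', pow_ne_zero (2*k) hw']
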